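/- Let V₁ and V₂ be commuting isometries on a complex Hilbert space H and V = V₁V₂. Then there exist a complex Hilbert space K, a linear isometry J : H → K, and commuting unitaries Y₁, Y₂ on K such that Y₁ ∘ J = J ∘ V₁, Y₂ ∘ J = J ∘ V₂, and the unitary Y := Y₁Y₂ is a minimal unitary extension of V, i.e. Y ∘ J = J ∘ V and K equals the closed linear span of { (Y*)ⁿ(Jh) : n ∈ ℕ, h ∈ H }. -/

import Mathlib

open ContinuousLinearMap

universe u

noncomputable section
namespace ItoExtAux

open UniformSpace

local notation "⟪" x ", " y "⟫" => @inner ℂ _ _ x y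

variable {H : Type u} [NormedAddCommGroup H] [InnerProductSpace ℂ H]

variable (V : H →L[ℂ] H)

/-- `V` preserves the inner product. -/
def IsIsom : Prop := ∀ x y : H, ⟪V x, V y⟫ = ⟪x, y⟫

/-- The relation generating the direct limit of `H → H → ⋯` along `V`.
If `V` is not inner-preserving we relate everything, so that the quotient is trivial;
this lets us put genuine instances on the quotient. -/
def rel (p q : ℕ × H) : Prop := ¬ IsIsom V ∨ (V ^ q.1) p.2 = (V ^ p.1) q.2

/-- The algebraic direct limit of `H` along `V`. -/
def PreK := Quot (rel V)

def mk (n : ℕ) (h : H) : PreK V := Quot.mk _ (n, h)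

lemma pow_pow (a b : ℕ) (x : H) : (V ^ a) ((V ^ b) x) = (V ^ (a + b)) x := by
  rw [pow_add, ContinuousLinearMap.mul_apply]

/-- Moving a vector up `a` levels does not change its class. -/
lemma mk_up (a n : ℕ) (h : H) : mk V (a + n) ((V ^ a) h) = mk V n h := by
  apply Quot.sound
  refine Or.inr ?_
  show (V ^ n) ((V ^ a) h) = (V ^ (a + n)) h
  rw [pow_pow, Nat.add_comm]

/-- Master lemma for proving equalities in `PreK`. -/
lemma mk_eq_mk {n m : ℕ} {h k : H} (a b : ℕ) (hab : a + n = b + m)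
    (hhk : (V ^ a) h = (V ^ b) k) : mk V n h = mk V m k := by
  rw [← mk_up V a n h, hhk, hab, mk_up]

instance : Add (PreK V) where
  add := Quot.lift₂
    (fun p q => mk V (p.1 + q.1) ((V ^ q.1) p.2 + (V ^ p.1) q.2))
    (by
      rintro ⟨n, h⟩ ⟨m₁, k₁⟩ ⟨m₂, k₂⟩ (hbad | (hr : (V ^ m₂) k₁ = (V ^ m₁) k₂))
      · exact Quot.sound (Or.inl hbad)
      refine mk_eq_mk V m₂ m₁ (by omega) ?_
      simp only [map_add, pow_pow]
      rw [show m₂ + m₁ = m₁ + m₂ by omega, show m₂ + n = n + m₂ by omega,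
        show m₁ + n = n + m₁ by omega, ← pow_pow V n m₂, ← pow_pow V n m₁, hr])
    (by
      rintro ⟨n₁, h₁⟩ ⟨n₂, h₂⟩ ⟨m, k⟩ (hbad | (hr : (V ^ n₂) h₁ = (V ^ n₁) h₂))
      · exact Quot.sound (Or.inl hbad)
      refine mk_eq_mk V n₂ n₁ (by omega) ?_
      simp only [map_add, pow_pow]
      rw [show n₂ + m = m + n₂ by omega, show n₁ + m = m + n₁ by omega,
        show n₂ + n₁ = n₁ + n₂ by omega, ← pow_pow V m n₂, ← pow_pow V m n₁, hr])

lemma mk_add_mk (n m : ℕ) (h k : H) :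
    mk V n h + mk V m k = mk V (n + m) ((V ^ m) h + (V ^ n) k) := rfl

instance : Zero (PreK V) := ⟨mk V 0 0⟩

lemma zero_def : (0 : PreK V) = mk V 0 0 := rfl

instance : Neg (PreK V) where
  neg := Quot.map (fun p => (p.1, -p.2))
    (by rintro ⟨n, h⟩ ⟨m, k⟩ (hbad | (hr : (V ^ m) h = (V ^ n) k))
        · exact Or.inl hbad
        refine Or.inr ?_
        show (V ^ m) (-h) = (V ^ n) (-k)
        rw [map_neg, map_neg, hr])

lemma neg_mk (n : ℕ) (h : H) : -(mk V n h) = mk V n (-h) := rfl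

instance : SMul ℂ (PreK V) where
  smul c := Quot.map (fun p => (p.1, c • p.2))
    (by rintro ⟨n, h⟩ ⟨m, k⟩ (hbad | (hr : (V ^ m) h = (V ^ n) k))
        · exact Or.inl hbad
        refine Or.inr ?_
        show (V ^ m) (c • h) = (V ^ n) (c • k)
        simp [hr])

lemma smul_mk (c : ℂ) (n : ℕ) (h : H) : c • (mk V n h) = mk V n (c • h) := rfl

lemma pre_induction {motive : PreK V → Prop} (x : PreK V)
    (mk : ∀ n h, motive (mk V n h)) : motive x := by
  induction x using Quot.ind with
  | _ p => exact mk p.1 p.2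

lemma pre_add_assoc (x y z : PreK V) : x + y + z = x + (y + z) := by
  induction x using pre_induction with | _ n h =>
  induction y using pre_induction with | _ m k =>
  induction z using pre_induction with | _ p l =>
  simp only [mk_add_mk, map_add, pow_pow]
  refine mk_eq_mk V 0 0 (by omega) ?_
  simp [add_assoc, Nat.add_comm p m, Nat.add_comm p n]

lemma pre_zero_add (x : PreK V) : 0 + x = x := by
  induction x using pre_induction with | _ n h =>
  rw [zero_def, mk_add_mk]
  refine mk_eq_mk V 0 0 (by omega) ?_
  simp

lemma pre_add_zero (x : PreK V) : x + 0 = x := by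
  induction x using pre_induction with | _ n h =>
  rw [zero_def, mk_add_mk]
  refine mk_eq_mk V 0 0 (by omega) ?_
  simp

lemma pre_add_comm (x y : PreK V) : x + y = y + x := by
  induction x using pre_induction with | _ n h =>
  induction y using pre_induction with | _ m k =>
  rw [mk_add_mk, mk_add_mk]
  refine mk_eq_mk V 0 0 (by omega) ?_
  simp [add_comm]

lemma pre_neg_add_cancel (x : PreK V) : -x + x = 0 := by
  induction x using pre_induction with | _ n h =>
  rw [neg_mk, mk_add_mk, zero_def]
  refine mk_eq_mk V 0 (n + n) (by omega) ?_
  simp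

instance : AddCommGroup (PreK V) where
  add_assoc := pre_add_assoc V
  zero_add := pre_zero_add V
  add_zero := pre_add_zero V
  add_comm := pre_add_comm V
  neg_add_cancel := pre_neg_add_cancel V
  nsmul := nsmulRec
  zsmul := zsmulRec

instance : Module ℂ (PreK V) where
  one_smul x := by
    induction x using pre_induction with | _ n h =>
    rw [smul_mk, one_smul]
  mul_smul c d x := by
    induction x using pre_induction with | _ n h =>
    simp only [smul_mk, mul_smul]
  smul_zero c := by rw [zero_def, smul_mk, smul_zero]
  smul_add c x y := by
    induction x using pre_induction with | _ n h =>
    induction y using pre_induction with | _ m k =>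
    simp only [mk_add_mk, smul_mk, smul_add, map_smul]
  add_smul c d x := by
    induction x using pre_induction with | _ n h =>
    simp only [smul_mk, mk_add_mk, add_smul, map_smul, pow_pow]
    refine mk_eq_mk V n 0 (by omega) ?_
    simp [map_add, map_smul, pow_pow]
  zero_smul x := by
    induction x using pre_induction with | _ n h =>
    rw [smul_mk, zero_smul, zero_def]
    exact mk_eq_mk V 0 n (by omega) (by simp)

lemma pow_inner (hV : IsIsom V) (a : ℕ) (x y : H) :
    ⟪(V ^ a) x, (V ^ a) y⟫ = ⟪x, y⟫ := by
  induction a generalizing x y with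
  | zero => simp
  | succ a ih =>
    have : ∀ z : H, (V ^ (a + 1)) z = (V ^ a) (V z) := by
      intro z; rw [pow_succ, ContinuousLinearMap.mul_apply]
    rw [this, this, ih (V x) (V y), hV]

open scoped Classical in
/-- The inner product on the direct limit (`0` in the degenerate case). -/
instance : Inner ℂ (PreK V) where
  inner := Quot.lift₂
    (fun p q => if hV : IsIsom V then ⟪(V ^ q.1) p.2, (V ^ p.1) q.2⟫ else 0)
    (by
      rintro ⟨n, h⟩ ⟨m₁, k₁⟩ ⟨m₂, k₂⟩ (hbad | (hr : (V ^ m₂) k₁ = (V ^ m₁) k₂))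
      · simp [dif_neg hbad]
      by_cases hV : IsIsom V
      · simp only [dif_pos hV]
        rw [← pow_inner V hV m₂ ((V ^ m₁) h) ((V ^ n) k₁), pow_pow, pow_pow,
          show m₂ + m₁ = m₁ + m₂ by omega, show m₂ + n = n + m₂ by omega,
          ← pow_pow V n m₂, hr, pow_pow, show n + m₁ = m₁ + n by omega,
          ← pow_pow V m₁ m₂, ← pow_pow V m₁ n, pow_inner V hV m₁]
      · simp [dif_neg hV])
    (by
      rintro ⟨n₁, h₁⟩ ⟨n₂, h₂⟩ ⟨m, k⟩ (hbad | (hr : (V ^ n₂) h₁ = (V ^ n₁) h₂))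
      · simp [dif_neg hbad]
      by_cases hV : IsIsom V
      · simp only [dif_pos hV]
        rw [← pow_inner V hV n₂ ((V ^ m) h₁) ((V ^ n₁) k), pow_pow, pow_pow,
          show n₂ + m = m + n₂ by omega, ← pow_pow V m n₂, hr, pow_pow,
          show m + n₁ = n₁ + m by omega, show n₂ + n₁ = n₁ + n₂ by omega,
          ← pow_pow V n₁ m, ← pow_pow V n₁ n₂, pow_inner V hV n₁]
      · simp [dif_neg hV])

lemma inner_mk_mk (hV : IsIsom V) (n m : ℕ) (h k : H) :
    ⟪mk V n h, mk V m k⟫ = ⟪(V ^ m) h, (V ^ n) k⟫ := dif_pos hV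

lemma inner_mk_mk_bad (hV : ¬ IsIsom V) (n m : ℕ) (h k : H) :
    ⟪mk V n h, mk V m k⟫ = 0 := dif_neg hV

lemma mk_eq_zero_bad (hV : ¬ IsIsom V) (n : ℕ) (h : H) : mk V n h = 0 :=
  Quot.sound (Or.inl hV)


instance corePreK : InnerProductSpace.Core ℂ (PreK V) where
  toInner := inferInstance
  conj_inner_symm x y := by
    induction x using pre_induction with | _ n h =>
    induction y using pre_induction with | _ m k =>
    by_cases hV : IsIsom V
    · rw [inner_mk_mk V hV, inner_mk_mk V hV, inner_conj_symm]
    · simp [inner_mk_mk_bad V hV]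
  re_inner_nonneg x := by
    induction x using pre_induction with | _ n h =>
    by_cases hV : IsIsom V
    · rw [inner_mk_mk V hV]
      exact inner_self_nonneg
    · simp [inner_mk_mk_bad V hV]
  definite x := by
    induction x using pre_induction with | _ n h =>
    intro hx
    by_cases hV : IsIsom V
    · rw [inner_mk_mk V hV, pow_inner V hV n h h] at hx
      rw [inner_self_eq_zero.mp hx]
      exact mk_eq_mk V 0 n (by omega) (by simp)
    · exact mk_eq_zero_bad V hV n h
  add_left x y z := by
    induction x using pre_induction with | _ n h =>
    induction y using pre_induction with | _ m k =>
    induction z using pre_induction with | _ p l =>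
    by_cases hV : IsIsom V
    · rw [mk_add_mk, inner_mk_mk V hV, inner_mk_mk V hV, inner_mk_mk V hV,
        map_add, inner_add_left]
      congr 1
      · rw [pow_pow, ← pow_inner V hV m ((V ^ p) h) ((V ^ n) l), pow_pow, pow_pow,
          Nat.add_comm m p, Nat.add_comm m n]
      · rw [pow_pow, ← pow_inner V hV n ((V ^ p) k) ((V ^ m) l), pow_pow, pow_pow,
          Nat.add_comm n p, Nat.add_comm n m]
    · simp [mk_add_mk, inner_mk_mk_bad V hV]
  smul_left x y r := by
    induction x using pre_induction with | _ n h =>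
    induction y using pre_induction with | _ m k =>
    by_cases hV : IsIsom V
    · rw [smul_mk, inner_mk_mk V hV, inner_mk_mk V hV, map_smul, inner_smul_left]
    · simp [smul_mk, inner_mk_mk_bad V hV]

instance : NormedAddCommGroup (PreK V) :=
  @InnerProductSpace.Core.toNormedAddCommGroup ℂ (PreK V) _ _ _ (corePreK V)
instance : InnerProductSpace ℂ (PreK V) := InnerProductSpace.ofCore (corePreK V).toCore


lemma inner_mk_mk' (hV : IsIsom V) (n m : ℕ) (h k : H) :
    ⟪mk V n h, mk V m k⟫ = ⟪(V ^ m) h, (V ^ n) k⟫ := dif_pos hV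

lemma pow_succ_apply (a : ℕ) (x : H) : (V ^ (a + 1)) x = V ((V ^ a) x) := by
  rw [pow_succ']; rfl


lemma mk_succ_V (n : ℕ) (h : H) : mk V (n + 1) (V h) = mk V n h := by
  have := mk_up V 1 n h
  rwa [pow_one, Nat.add_comm] at this

section Maps

variable (W : H →L[ℂ] H)

lemma comm_apply (hc : V * W = W * V) (x : H) : V (W x) = W (V x) := by
  have := congrArg (fun T : H →L[ℂ] H => T x) hc
  simpa using this

lemma pow_comm_apply (hc : V * W = W * V) (a : ℕ) (x : H) :
    (V ^ a) (W x) = W ((V ^ a) x) := by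
  induction a generalizing x with
  | zero => simp
  | succ a ih =>
    rw [pow_succ_apply, pow_succ_apply, ih x, comm_apply V W hc]

/-- The map `[(n, h)] ↦ [(n, W h)]` on the direct limit, for `W` commuting with `V`. -/
def preY (hc : V * W = W * V) : PreK V →ₗ[ℂ] PreK V where
  toFun := Quot.map (fun p => (p.1, W p.2))
    (by rintro ⟨n, h⟩ ⟨m, k⟩ (hbad | (hr : (V ^ m) h = (V ^ n) k))
        · exact Or.inl hbad
        refine Or.inr ?_
        show (V ^ m) (W h) = (V ^ n) (W k)
        rw [pow_comm_apply V W hc, pow_comm_apply V W hc, hr])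
  map_add' x y := by
    induction x using pre_induction with | _ n h =>
    induction y using pre_induction with | _ m k =>
    show mk V (n + m) (W ((V ^ m) h + (V ^ n) k)) =
      mk V n (W h) + mk V m (W k)
    rw [mk_add_mk]
    refine mk_eq_mk V 0 0 (by omega) ?_
    simp [map_add, pow_comm_apply V W hc, comm_apply V W hc]
  map_smul' c x := by
    induction x using pre_induction with | _ n h =>
    show mk V n (W (c • h)) = c • mk V n (W h)
    rw [smul_mk, map_smul]

lemma preY_mk (hc : V * W = W * V) (n : ℕ) (h : H) :
    preY V W hc (mk V n h) = mk V n (W h) := rfl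

/-- The map `[(n, h)] ↦ [(n+1, W h)]` on the direct limit, for `W` commuting with `V`. -/
def preS (hc : V * W = W * V) : PreK V →ₗ[ℂ] PreK V where
  toFun := Quot.map (fun p => (p.1 + 1, W p.2))
    (by rintro ⟨n, h⟩ ⟨m, k⟩ (hbad | (hr : (V ^ m) h = (V ^ n) k))
        · exact Or.inl hbad
        refine Or.inr ?_
        show (V ^ (m + 1)) (W h) = (V ^ (n + 1)) (W k)
        rw [pow_comm_apply V W hc, pow_comm_apply V W hc,
          pow_succ_apply, pow_succ_apply, hr])
  map_add' x y := by
    induction x using pre_induction with | _ n h =>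
    induction y using pre_induction with | _ m k =>
    show mk V (n + m + 1) (W ((V ^ m) h + (V ^ n) k)) =
      mk V (n + 1) (W h) + mk V (m + 1) (W k)
    rw [mk_add_mk]
    refine mk_eq_mk V 1 0 (by omega) ?_
    simp [map_add, pow_comm_apply V W hc, pow_pow, pow_succ_apply, pow_one,
      comm_apply V W hc]
    rw [← Function.iterate_succ_apply' (⇑V) m h, Function.iterate_succ_apply,
      ← Function.iterate_succ_apply' (⇑V) n k, Function.iterate_succ_apply]
  map_smul' c x := by
    induction x using pre_induction with | _ n h =>
    show mk V (n + 1) (W (c • h)) = c • mk V (n + 1) (W h)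
    rw [smul_mk, map_smul]

lemma preS_mk (hc : V * W = W * V) (n : ℕ) (h : H) :
    preS V W hc (mk V n h) = mk V (n + 1) (W h) := rfl

/-- `preY` as a linear isometry. -/
def preYI (hV : IsIsom V) (hc : V * W = W * V)
    (hW : ∀ x y : H, ⟪W x, W y⟫ = ⟪x, y⟫) : PreK V →ₗᵢ[ℂ] PreK V :=
  (preY V W hc).isometryOfInner (by
    intro x y
    induction x using pre_induction with | _ n h =>
    induction y using pre_induction with | _ m k =>
    rw [preY_mk, preY_mk, inner_mk_mk' V hV, inner_mk_mk' V hV,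
      pow_comm_apply V W hc, pow_comm_apply V W hc, hW])

/-- `preS` as a linear isometry. -/
def preSI (hV : IsIsom V) (hc : V * W = W * V)
    (hW : ∀ x y : H, ⟪W x, W y⟫ = ⟪x, y⟫) : PreK V →ₗᵢ[ℂ] PreK V :=
  (preS V W hc).isometryOfInner (by
    intro x y
    induction x using pre_induction with | _ n h =>
    induction y using pre_induction with | _ m k =>
    rw [preS_mk, preS_mk, inner_mk_mk' V hV, inner_mk_mk' V hV,
      pow_comm_apply V W hc, pow_comm_apply V W hc,
      pow_succ_apply, pow_succ_apply, hW, hV])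

lemma preYI_mk (hV hc hW) (n : ℕ) (h : H) :
    preYI V W hV hc hW (mk V n h) = mk V n (W h) := rfl

lemma preSI_mk (hV hc hW) (n : ℕ) (h : H) :
    preSI V W hV hc hW (mk V n h) = mk V (n + 1) (W h) := rfl

/-- The canonical embedding of `H` into the direct limit. -/
def preJ (hV : IsIsom V) : H →ₗᵢ[ℂ] PreK V :=
  LinearMap.isometryOfInner
    { toFun := fun h => mk V 0 h
      map_add' := fun h k => by
        rw [mk_add_mk]
        refine mk_eq_mk V 0 0 (by omega) ?_
        simp
      map_smul' := fun c h => (smul_mk V c 0 h).symm }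
    (by intro x y
        show ⟪mk V 0 x, mk V 0 y⟫ = ⟪x, y⟫
        rw [inner_mk_mk' V hV]
        simp)

lemma preJ_mk (hV : IsIsom V) (h : H) : preJ V hV h = mk V 0 h := rfl

end Maps


section ComplMap

open UniformSpace

variable {E : Type u} [NormedAddCommGroup E] [InnerProductSpace ℂ E]

/-- Extend a linear isometry to the completion. -/
def complMap (g : E →ₗᵢ[ℂ] E) : Completion E →ₗᵢ[ℂ] Completion E where
  toLinearMap :=
    { toFun := Completion.map g
      map_add' := by
        intro x y
        refine Completion.induction_on₂ x y ?_ ?_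
        · apply isClosed_eq
          · exact Completion.continuous_map.comp continuous_add
          · exact ((Completion.continuous_map (f := ⇑g)).comp continuous_fst).add
              ((Completion.continuous_map (f := ⇑g)).comp continuous_snd)
        · intro a b
          rw [← Completion.coe_add,
            Completion.map_coe g.isometry.uniformContinuous,
            Completion.map_coe g.isometry.uniformContinuous,
            Completion.map_coe g.isometry.uniformContinuous,
            map_add, Completion.coe_add]
      map_smul' := by
        intro c x
        refine Completion.induction_on x ?_ ?_
        · apply isClosed_eq
          · exact Completion.continuous_map.comp (continuous_const_smul c)
          · exact (Completion.continuous_map (f := ⇑g)).const_smul ((RingHom.id ℂ) c)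
        · intro a
          show Completion.map ⇑g (c • ((a : E) : Completion E)) =
            c • Completion.map ⇑g ((a : E) : Completion E)
          rw [← Completion.coe_smul,
            Completion.map_coe g.isometry.uniformContinuous,
            Completion.map_coe g.isometry.uniformContinuous, map_smul,
            Completion.coe_smul] }
  norm_map' := by
    intro x
    refine Completion.induction_on x ?_ ?_
    · apply isClosed_eq
      · exact continuous_norm.comp Completion.continuous_map
      · exact continuous_norm
    · intro a
      show ‖Completion.map g a‖ = ‖(a : Completion E)‖
      rw [Completion.map_coe g.isometry.uniformContinuous]
      rw [Completion.norm_coe, Completion.norm_coe, g.norm_map]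

lemma complMap_coe (g : E →ₗᵢ[ℂ] E) (a : E) :
    complMap g (a : Completion E) = (g a : Completion E) :=
  Completion.map_coe g.isometry.uniformContinuous a

lemma complMap_comp_self (g g' : E →ₗᵢ[ℂ] E) (hgg' : ∀ a, g (g' a) = a) (x : Completion E) :
    complMap g (complMap g' x) = x := by
  refine Completion.induction_on x ?_ ?_
  · apply isClosed_eq
    · exact (complMap g).continuous.comp (complMap g').continuous
    · exact continuous_id
  · intro a
    rw [complMap_coe, complMap_coe, hgg']

end ComplMap

end ItoExtAux

open ItoExtAux UniformSpace in
/-- Commuting isometries `V₁, V₂` with `V = V₁V₂` extend to commuting unitaries `Y₁, Y₂`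
such that `Y = Y₁Y₂` is a *minimal* unitary extension of `V`:
`Y ∘ J = J ∘ V` and `K` is the closed linear span of `{ (Y*)ⁿ (J h) }`. -/
theorem commuting_isometries_extend_to_unitaries {H : Type u} [NormedAddCommGroup H]
    [InnerProductSpace ℂ H] [CompleteSpace H] (V₁ V₂ : H →L[ℂ] H)
    (hV₁ : adjoint V₁ * V₁ = 1) (hV₂ : adjoint V₂ * V₂ = 1) (hcomm : V₁ * V₂ = V₂ * V₁) :
    ∃ (K : Type u) (_ : NormedAddCommGroup K) (_ : InnerProductSpace ℂ K) (_ : CompleteSpace K)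
      (J : H →ₗᵢ[ℂ] K) (Y₁ Y₂ : K →L[ℂ] K),
        adjoint Y₁ * Y₁ = 1 ∧ Y₁ * adjoint Y₁ = 1 ∧
        adjoint Y₂ * Y₂ = 1 ∧ Y₂ * adjoint Y₂ = 1 ∧
        Y₁ * Y₂ = Y₂ * Y₁ ∧
        (∀ h : H, Y₁ (J h) = J (V₁ h)) ∧
        (∀ h : H, Y₂ (J h) = J (V₂ h)) ∧
        (∀ h : H, (Y₁ * Y₂) (J h) = J ((V₁ * V₂) h)) ∧
        (Submodule.span ℂ
            {x : K | ∃ (n : ℕ) (h : H), x = ((adjoint (Y₁ * Y₂)) ^ n) (J h)}).topologicalClosure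
          = ⊤ := by
  classical
  have hin : ∀ (W : H →L[ℂ] H), adjoint W * W = 1 →
      ∀ x y : H, (inner ℂ (W x) (W y) : ℂ) = inner ℂ x y := by
    intro W hW x y
    have h1 : (inner ℂ (adjoint W (W x)) y : ℂ) = inner ℂ (W x) (W y) :=
      ContinuousLinearMap.adjoint_inner_left W y (W x)
    rw [← h1, ← ContinuousLinearMap.mul_apply, hW, ContinuousLinearMap.one_apply]
  have hin1 := hin V₁ hV₁
  have hin2 := hin V₂ hV₂
  have hV : IsIsom (V₁ * V₂) := by
    intro x y
    show (inner ℂ (V₁ (V₂ x)) (V₁ (V₂ y)) : ℂ) = inner ℂ x y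
    rw [hin1, hin2]
  have hc1 : (V₁ * V₂) * V₁ = V₁ * (V₁ * V₂) := by
    rw [mul_assoc, ← hcomm]
  have hc2 : (V₁ * V₂) * V₂ = V₂ * (V₁ * V₂) := by
    have : V₂ * (V₁ * V₂) = (V₁ * V₂) * V₂ := by rw [← mul_assoc, ← hcomm]
    exact this.symm
  have hcomp1 : ∀ x : H, V₁ (V₂ x) = (V₁ * V₂) x := fun _ => rfl
  have hcomp2 : ∀ x : H, V₂ (V₁ x) = (V₁ * V₂) x := fun x => by
    rw [← ContinuousLinearMap.mul_apply, ← hcomm]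
  set Vp := V₁ * V₂ with hVp
  set E := PreK Vp with hE
  set K := Completion E with hK
  set Jp : H →ₗᵢ[ℂ] E := preJ Vp hV with hJp
  set J : H →ₗᵢ[ℂ] K := (Completion.toComplₗᵢ (𝕜 := ℂ) (E := E)).comp Jp with hJ
  set e₁ : K →ₗᵢ[ℂ] K := complMap (preYI Vp V₁ hV hc1 hin1) with he₁
  set f₁ : K →ₗᵢ[ℂ] K := complMap (preSI Vp V₂ hV hc2 hin2) with hf₁
  set e₂ : K →ₗᵢ[ℂ] K := complMap (preYI Vp V₂ hV hc2 hin2) with he₂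
  set f₂ : K →ₗᵢ[ℂ] K := complMap (preSI Vp V₁ hV hc1 hin1) with hf₂
  -- pre-level identities
  have pre_ef₁ : ∀ z, preYI Vp V₁ hV hc1 hin1 (preSI Vp V₂ hV hc2 hin2 z) = z := by
    intro z
    induction z using pre_induction with | _ n h =>
    rw [preSI_mk, preYI_mk, hcomp1, mk_succ_V]
  have pre_fe₁ : ∀ z, preSI Vp V₂ hV hc2 hin2 (preYI Vp V₁ hV hc1 hin1 z) = z := by
    intro z
    induction z using pre_induction with | _ n h =>
    rw [preYI_mk, preSI_mk, hcomp2, mk_succ_V]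
  have pre_ef₂ : ∀ z, preYI Vp V₂ hV hc2 hin2 (preSI Vp V₁ hV hc1 hin1 z) = z := by
    intro z
    induction z using pre_induction with | _ n h =>
    rw [preSI_mk, preYI_mk, hcomp2, mk_succ_V]
  have pre_fe₂ : ∀ z, preSI Vp V₁ hV hc1 hin1 (preYI Vp V₂ hV hc2 hin2 z) = z := by
    intro z
    induction z using pre_induction with | _ n h =>
    rw [preYI_mk, preSI_mk, hcomp1, mk_succ_V]
  have ef₁ : ∀ x, e₁ (f₁ x) = x := complMap_comp_self _ _ pre_ef₁
  have fe₁ : ∀ x, f₁ (e₁ x) = x := complMap_comp_self _ _ pre_fe₁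
  have ef₂ : ∀ x, e₂ (f₂ x) = x := complMap_comp_self _ _ pre_ef₂
  have fe₂ : ∀ x, f₂ (e₂ x) = x := complMap_comp_self _ _ pre_fe₂
  -- adjoints of extended isometries
  have hadj : ∀ (e f : K →ₗᵢ[ℂ] K), (∀ x, e (f x) = x) →
      adjoint e.toContinuousLinearMap = f.toContinuousLinearMap := by
    intro e f hef
    symm
    rw [ContinuousLinearMap.eq_adjoint_iff]
    intro x y
    show (inner ℂ (f x) y : ℂ) = inner ℂ x (e y)
    rw [← e.inner_map_map (f x) y, hef x]
  refine ⟨K, inferInstance, inferInstance, inferInstance, J,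
    e₁.toContinuousLinearMap, e₂.toContinuousLinearMap, ?_, ?_, ?_, ?_, ?_, ?_, ?_, ?_, ?_⟩
  · rw [hadj e₁ f₁ ef₁]
    ext x
    exact fe₁ x
  · rw [hadj e₁ f₁ ef₁]
    ext x
    exact ef₁ x
  · rw [hadj e₂ f₂ ef₂]
    ext x
    exact fe₂ x
  · rw [hadj e₂ f₂ ef₂]
    ext x
    exact ef₂ x
  · ext x
    show e₁ (e₂ x) = e₂ (e₁ x)
    refine Completion.induction_on x ?_ ?_
    · exact isClosed_eq (e₁.continuous.comp e₂.continuous) (e₂.continuous.comp e₁.continuous)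
    · intro z
      rw [he₁, he₂, complMap_coe, complMap_coe, complMap_coe, complMap_coe]
      congr 1
      induction z using pre_induction with | _ n h =>
      rw [preYI_mk, preYI_mk, preYI_mk, preYI_mk, hcomp1, hcomp2]
  · intro h
    show e₁ ((Jp h : E) : K) = ((Jp (V₁ h) : E) : K)
    rw [he₁, complMap_coe]
    congr 1
  · intro h
    show e₂ ((Jp h : E) : K) = ((Jp (V₂ h) : E) : K)
    rw [he₂, complMap_coe]
    congr 1
  · intro h
    show e₁ (e₂ ((Jp h : E) : K)) = ((Jp ((V₁ * V₂) h) : E) : K)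
    rw [he₁, he₂, complMap_coe, complMap_coe]
    congr 1
  · -- minimality
    have hYc :
        e₁.toContinuousLinearMap * e₂.toContinuousLinearMap
          = (e₁.comp e₂).toContinuousLinearMap := by
      ext x; rfl
    have hEF : ∀ x, (e₁.comp e₂) ((f₂.comp f₁) x) = x := by
      intro x
      show e₁ (e₂ (f₂ (f₁ x))) = x
      rw [ef₂, ef₁]
    have hstep : ∀ (n : ℕ) (h : H),
        adjoint (e₁.toContinuousLinearMap * e₂.toContinuousLinearMap)
          ((mk Vp n h : E) : K) = ((mk Vp (n + 1) h : E) : K) := by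
      intro n h
      rw [hYc, hadj (e₁.comp e₂) (f₂.comp f₁) hEF]
      show f₂ (f₁ ((mk Vp n h : E) : K)) = ((mk Vp (n + 1) h : E) : K)
      rw [hf₁, hf₂, complMap_coe, complMap_coe]
      congr 1
      rw [preSI_mk, preSI_mk, hcomp1, mk_succ_V]
    have hpow : ∀ (m n : ℕ) (h : H),
        ((adjoint (e₁.toContinuousLinearMap * e₂.toContinuousLinearMap)) ^ m)
          ((mk Vp n h : E) : K) = ((mk Vp (n + m) h : E) : K) := by
      intro m
      induction m with
      | zero => intro n h; simp
      | succ m ih =>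
        intro n h
        rw [pow_succ, ContinuousLinearMap.mul_apply, hstep n h, ih (n + 1) h,
          show n + 1 + m = n + (m + 1) by omega]
    rw [← Submodule.dense_iff_topologicalClosure_eq_top]
    intro x
    have hsub : Set.range ((↑) : E → K) ⊆
        (Submodule.span ℂ {x : K | ∃ (n : ℕ) (h : H),
          x = ((adjoint (e₁.toContinuousLinearMap * e₂.toContinuousLinearMap)) ^ n)
            (J h)} : Set K) := by
      rintro _ ⟨z, rfl⟩
      induction z using pre_induction with | _ n h =>
      apply Submodule.subset_span
      refine ⟨n, h, ?_⟩
      have : J h = ((mk Vp 0 h : E) : K) := by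
        rw [hJ]
        show ((Jp h : E) : K) = _
        rw [hJp, preJ_mk]
      rw [this, hpow n 0 h, Nat.zero_add]
    exact closure_mono hsub (Completion.denseRange_coe x)
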